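/- Let n ≥ 4 and let M_{2ⁿ} be the group of order 2ⁿ realized as the semidirect product (ZMod 2^{n−1}) ⋊ (ZMod 2) in which the nontrivial element of ZMod 2 acts on ZMod 2^{n−1} by multiplication by 2^{n−2} + 1; write X = (1,0) and Y = (0,1). Let a : M_{2ⁿ} → ℤ, write a_j := a(X^j) and b_j := a(Y·X^j) for 0 ≤ j ≤ 2^{n−1} − 1, and define f(z) = Σ_j a_j z^j and g(z) = Σ_j b_j z^j for z ∈ ℂ. Then, with λ_j = exp(2πi·j/2^{n−1}), the integer group determinant satisfies (D_{M_{2ⁿ}}(a) : ℂ) = ∏_{j=0}^{2^{n−1}−1} ( f(λ_j)·f(λ_j^{2^{n−2}+1}) − g(λ_j)·g(λ_j^{2^{n−2}+1}) ). -/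

import Mathlib

open SemidirectProduct

instance sdpFintype {N H : Type*} [Group N] [Group H] {φ : H →* MulAut N}
    [Fintype N] [Fintype H] : Fintype (N ⋊[φ] H) :=
  Fintype.ofEquiv (N × H)
    ⟨fun p => ⟨p.1, p.2⟩, fun g => (g.left, g.right), fun _ => rfl, fun _ => rfl⟩

instance sdpDecEq {N H : Type*} [Group N] [Group H] {φ : H →* MulAut N}
    [DecidableEq N] [DecidableEq H] : DecidableEq (N ⋊[φ] H) := fun a b =>
  decidable_of_iff (a.left = b.left ∧ a.right = b.right)
    (by cases a; cases b; simp [SemidirectProduct.ext_iff])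

/-- The integer group determinant of `a : G → ℤ`. -/
def groupDet {G : Type*} [Group G] [Fintype G] [DecidableEq G] (a : G → ℤ) : ℤ :=
  Matrix.det (Matrix.of fun g h : G => a (g * h⁻¹))

/-- The additive automorphism of `ZMod m` given by multiplication by a self-inverse
element `c`, viewed as a multiplicative automorphism of `Multiplicative (ZMod m)`. -/
def mulBy {m : ℕ} (c : ZMod m) (hc : c * c = 1) :
    MulAut (Multiplicative (ZMod m)) where
  toFun x := Multiplicative.ofAdd (c * x.toAdd)
  invFun x := Multiplicative.ofAdd (c * x.toAdd)
  left_inv x := by simp [← mul_assoc, hc]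
  right_inv x := by simp [← mul_assoc, hc]
  map_mul' x y := by simp [mul_add]

lemma mulBy_sq {m : ℕ} (c : ZMod m) (hc : c * c = 1) : (mulBy c hc) ^ 2 = 1 := by
  ext x
  rw [sq]
  show (mulBy c hc) ((mulBy c hc) x) = x
  simp [mulBy, ← mul_assoc, hc]

/-- The homomorphism from `Multiplicative (ZMod 2)` sending the nontrivial element to a
given element of order dividing 2. -/
def homOfOrderTwo {G : Type*} [Group G] (g : G) (hg : g ^ 2 = 1) :
    Multiplicative (ZMod 2) →* G :=
  MonoidHom.mk' (fun x => g ^ (Multiplicative.toAdd x).val) (by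
    intro a b
    show g ^ (Multiplicative.toAdd (a * b)).val =
      g ^ (Multiplicative.toAdd a).val * g ^ (Multiplicative.toAdd b).val
    have h : Multiplicative.toAdd (a * b) = Multiplicative.toAdd a + Multiplicative.toAdd b := rfl
    rw [← pow_add, h, ZMod.val_add, ← pow_eq_pow_mod _ hg])

lemma pow_pred_eq_zero (n : ℕ) (hn : 4 ≤ n) :
    (2 : ZMod (2 ^ (n - 1))) ^ (n - 1) = 0 := by
  have := ZMod.natCast_self (2 ^ (n - 1))
  push_cast at this
  exact this

lemma key_sq (n : ℕ) (hn : 4 ≤ n) :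
    (2 : ZMod (2 ^ (n - 1))) ^ (n - 2) * 2 ^ (n - 2) = 0 := by
  have h : (n - 2) + (n - 2) = (n - 1) + (n - 3) := by omega
  rw [← pow_add, h, pow_add, pow_pred_eq_zero n hn, zero_mul]

lemma key_two (n : ℕ) (hn : 4 ≤ n) :
    (2 : ZMod (2 ^ (n - 1))) ^ (n - 2) + 2 ^ (n - 2) = 0 := by
  have h : (n - 2) + 1 = n - 1 := by omega
  rw [← two_mul, ← pow_succ', h, pow_pred_eq_zero n hn]

/-- The element `2 ^ (n - 2) + 1` of `ZMod (2 ^ (n - 1))`. -/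
def mc (n : ℕ) : ZMod (2 ^ (n - 1)) := 2 ^ (n - 2) + 1

lemma mc_sq (n : ℕ) (hn : 4 ≤ n) : mc n * mc n = 1 := by
  unfold mc
  linear_combination key_sq n hn + key_two n hn

/-- The modular maximal-cyclic group of order `2 ^ n`, realized as
`(ZMod 2 ^ (n - 1)) ⋊ (ZMod 2)` with the nontrivial element of `ZMod 2` acting by
multiplication by `2 ^ (n - 2) + 1`. -/
abbrev Mpow (n : ℕ) (hn : 4 ≤ n) : Type :=
  Multiplicative (ZMod (2 ^ (n - 1))) ⋊[homOfOrderTwo (mulBy (mc n) (mc_sq n hn))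
    (mulBy_sq _ _)] Multiplicative (ZMod 2)

/-- The generator `X` of order `2 ^ (n - 1)`. -/
def Mpow.X (n : ℕ) (hn : 4 ≤ n) : Mpow n hn := inl (Multiplicative.ofAdd 1)

/-- The generator `Y` of order `2`. -/
def Mpow.Y (n : ℕ) (hn : 4 ≤ n) : Mpow n hn := inr (Multiplicative.ofAdd 1)

open Matrix

section Fourier
variable (m : ℕ) [NeZero m]

noncomputable def gdω : ℂ := Complex.exp (2 * Real.pi * Complex.I / m)

lemma gdω_prim : IsPrimitiveRoot (gdω m) m :=
  Complex.isPrimitiveRoot_exp m (NeZero.ne m)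

lemma gdω_pow_one : gdω m ^ m = 1 := (gdω_prim m).pow_eq_one

lemma gdω_pow_congr {a b : ℕ} (h : (a : ZMod m) = (b : ZMod m)) :
    gdω m ^ a = gdω m ^ b := by
  rw [ZMod.natCast_eq_natCast_iff'] at h
  rw [pow_eq_pow_mod a (gdω_pow_one m), h, ← pow_eq_pow_mod b (gdω_pow_one m)]

noncomputable def gde (u : ZMod m) : ℂ := gdω m ^ u.val

lemma gde_natCast (k : ℕ) : gde m (k : ZMod m) = gdω m ^ k := by
  unfold gde
  exact gdω_pow_congr m (by simp [ZMod.natCast_zmod_val])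

lemma gde_add (u v : ZMod m) : gde m (u + v) = gde m u * gde m v := by
  unfold gde
  rw [← pow_add]
  exact gdω_pow_congr m (by push_cast [ZMod.natCast_zmod_val]; ring)

lemma gde_pow (u : ZMod m) (k : ℕ) : gde m u ^ k = gde m ((k : ZMod m) * u) := by
  unfold gde
  rw [← pow_mul]
  exact gdω_pow_congr m (by push_cast [ZMod.natCast_zmod_val]; ring)

noncomputable def gdF : Matrix (ZMod m) (ZMod m) ℂ :=
  Matrix.of fun x j => gde m (x * j)

/-- symbol of a circulant -/
noncomputable def gdsig (v : ZMod m → ℂ) (t : ZMod m) : ℂ :=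
  ∑ u : ZMod m, v u * gde m (u * t)

def finZModEquiv : Fin m ≃ ZMod m :=
  ⟨fun i => (i : ℕ), fun x => ⟨x.val, x.val_lt⟩,
    fun i => by simp [ZMod.val_cast_of_lt i.isLt],
    fun x => by simp [ZMod.natCast_zmod_val]⟩

lemma gdF_det_ne_zero : (gdF m).det ≠ 0 := by
  set e := finZModEquiv m
  rw [← Matrix.det_submatrix_equiv_self e]
  have : (gdF m).submatrix e e = (Matrix.vandermonde fun i : Fin m => gdω m ^ (i : ℕ))ᵀ := by
    ext i j
    simp only [submatrix_apply, transpose_apply, vandermonde_apply, gdF, of_apply]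
    show gde m (((i : ℕ) : ZMod m) * ((j : ℕ) : ZMod m)) = _
    rw [show ((i : ℕ) : ZMod m) * ((j : ℕ) : ZMod m) = (((j : ℕ) * (i : ℕ) : ℕ) : ZMod m) by
      push_cast; ring, gde_natCast, pow_mul]
  rw [this, Matrix.det_transpose]
  rw [Matrix.det_vandermonde_ne_zero_iff]
  intro i j hij
  exact Fin.ext ((gdω_prim m).pow_inj i.isLt j.isLt hij)

lemma circulant_mul_gdF (v : ZMod m → ℂ) :
    Matrix.circulant v * gdF m =
      gdF m * Matrix.diagonal (fun j => gdsig m v (-j)) := by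
  ext x j
  rw [mul_apply, mul_apply]
  have hR : (∑ k : ZMod m, gdF m x k *
      Matrix.diagonal (fun j => gdsig m v (-j)) k j) = gde m (x * j) * gdsig m v (-j) := by
    rw [Finset.sum_eq_single j (fun b _ hb => by
      simp [Matrix.diagonal_apply_ne _ hb]) (by simp)]
    simp [gdF]
  rw [hR, gdsig, Finset.mul_sum]
  refine (Fintype.sum_equiv (Equiv.subLeft x) _ _ fun u => ?_).symm
  simp only [Equiv.subLeft_apply, circulant_apply, gdF, of_apply, sub_sub_cancel]
  rw [show (x - u) * j = x * j + u * (-j) by ring, gde_add]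
  ring

end Fourier

section Blocks

def sumFinEquiv (α : Type*) : (α ⊕ α) ≃ (Fin 2 × α) where
  toFun := Sum.elim (fun x => (0, x)) (fun x => (1, x))
  invFun p := ![Sum.inl, Sum.inr] p.1 p.2
  left_inv := by rintro (x | x) <;> rfl
  right_inv := by rintro ⟨i, x⟩; fin_cases i <;> rfl

lemma det_fromBlocks_diagonal {α : Type*} [Fintype α] [DecidableEq α]
    (d1 d2 d3 d4 : α → ℂ) :
    (Matrix.fromBlocks (Matrix.diagonal d1) (Matrix.diagonal d2)
      (Matrix.diagonal d3) (Matrix.diagonal d4)).det =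
    ∏ j : α, (d1 j * d4 j - d2 j * d3 j) := by
  have hsub : Matrix.fromBlocks (Matrix.diagonal d1) (Matrix.diagonal d2)
      (Matrix.diagonal d3) (Matrix.diagonal d4) =
      (Matrix.blockDiagonal (fun j : α => !![d1 j, d2 j; d3 j, d4 j])).submatrix
        (sumFinEquiv α) (sumFinEquiv α) := by
    ext (x | x) (y | y) <;>
      simp [sumFinEquiv, Matrix.blockDiagonal_apply, Matrix.diagonal_apply] <;>
      rcases eq_or_ne x y with h | h <;> simp [h]
  rw [hsub, Matrix.det_submatrix_equiv_self, Matrix.det_blockDiagonal]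
  exact Finset.prod_congr rfl fun j _ => Matrix.det_fin_two_of _ _ _ _

lemma det_fromBlocks_circulant (m : ℕ) [NeZero m] (v1 v2 v3 v4 : ZMod m → ℂ) :
    (Matrix.fromBlocks (Matrix.circulant v1) (Matrix.circulant v2)
      (Matrix.circulant v3) (Matrix.circulant v4)).det =
    ∏ j : ZMod m,
      (gdsig m v1 j * gdsig m v4 j - gdsig m v2 j * gdsig m v3 j) := by
  have key : Matrix.fromBlocks (Matrix.circulant v1) (Matrix.circulant v2)
      (Matrix.circulant v3) (Matrix.circulant v4) *
      Matrix.fromBlocks (gdF m) 0 0 (gdF m) =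
      Matrix.fromBlocks (gdF m) 0 0 (gdF m) *
      Matrix.fromBlocks (Matrix.diagonal fun j => gdsig m v1 (-j))
        (Matrix.diagonal fun j => gdsig m v2 (-j))
        (Matrix.diagonal fun j => gdsig m v3 (-j))
        (Matrix.diagonal fun j => gdsig m v4 (-j)) := by
    rw [Matrix.fromBlocks_multiply, Matrix.fromBlocks_multiply]
    simp [circulant_mul_gdF]
  have hdetF : (Matrix.fromBlocks (gdF m) 0 0 (gdF m)).det ≠ 0 := by
    rw [Matrix.det_fromBlocks_zero₂₁]
    exact mul_ne_zero (gdF_det_ne_zero m) (gdF_det_ne_zero m)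
  have := congrArg Matrix.det key
  rw [Matrix.det_mul, Matrix.det_mul, mul_comm] at this
  have h2 := mul_left_cancel₀ hdetF this
  rw [h2, det_fromBlocks_diagonal]
  exact Fintype.prod_equiv (Equiv.neg (ZMod m)) _ _ fun j => by simp

end Blocks


lemma sum_zmod (m : ℕ) [NeZero m] (h : ZMod m → ℂ) :
    ∑ u : ZMod m, h u = ∑ k ∈ Finset.range m, h (k : ZMod m) := by
  rw [← Fin.sum_univ_eq_sum_range (fun k => h (k : ZMod m)) m]
  exact (Fintype.sum_equiv (finZModEquiv m) _ _ fun i => rfl).symm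

lemma prod_zmod (m : ℕ) [NeZero m] (h : ZMod m → ℂ) :
    ∏ u : ZMod m, h u = ∏ k ∈ Finset.range m, h (k : ZMod m) := by
  rw [← Fin.prod_univ_eq_prod_range (fun k => h (k : ZMod m)) m]
  exact (Fintype.prod_equiv (finZModEquiv m) _ _ fun i => rfl).symm

section GroupStruct


variable (n : ℕ) (hn : 4 ≤ n)

/-- the element (x, ε) of Mpow. -/
def elemM (x : ZMod (2 ^ (n - 1))) (ε : ZMod 2) : Mpow n hn :=
  ⟨Multiplicative.ofAdd x, Multiplicative.ofAdd ε⟩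

lemma phi0 : (homOfOrderTwo (mulBy (mc n) (mc_sq n hn)) (mulBy_sq _ _))
    (Multiplicative.ofAdd (0 : ZMod 2)) = 1 := by
  rw [ofAdd_zero, _root_.map_one]

lemma phi1 : (homOfOrderTwo (mulBy (mc n) (mc_sq n hn)) (mulBy_sq _ _))
    (Multiplicative.ofAdd (1 : ZMod 2)) = mulBy (mc n) (mc_sq n hn) := by
  show mulBy (mc n) (mc_sq n hn) ^ (Multiplicative.toAdd
    (Multiplicative.ofAdd (1 : ZMod 2))).val = _
  have h1 : (Multiplicative.toAdd (Multiplicative.ofAdd (1 : ZMod 2))).val = 1 := rfl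
  rw [h1, pow_one]

lemma elemM_mul0 (x y : ZMod (2 ^ (n - 1))) (δ : ZMod 2) :
    elemM n hn x 0 * elemM n hn y δ = elemM n hn (x + y) δ := by
  unfold elemM
  ext
  · rw [SemidirectProduct.mul_left]
    show Multiplicative.ofAdd x * (homOfOrderTwo (mulBy (mc n) (mc_sq n hn))
      (mulBy_sq (mc n) (mc_sq n hn)))
      (Multiplicative.ofAdd (0 : ZMod 2)) (Multiplicative.ofAdd y) = _
    rw [phi0]
    · rfl
    · exact hn
  · rw [SemidirectProduct.mul_right, ← ofAdd_add, zero_add]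

lemma elemM_mul1 (x y : ZMod (2 ^ (n - 1))) (δ : ZMod 2) :
    elemM n hn x 1 * elemM n hn y δ = elemM n hn (x + mc n * y) (1 + δ) := by
  unfold elemM
  ext
  · rw [SemidirectProduct.mul_left]
    show Multiplicative.ofAdd x * (homOfOrderTwo (mulBy (mc n) (mc_sq n hn))
      (mulBy_sq (mc n) (mc_sq n hn)))
      (Multiplicative.ofAdd (1 : ZMod 2)) (Multiplicative.ofAdd y) = _
    rw [phi1]
    · rfl
    · exact hn
  · rw [SemidirectProduct.mul_right, ← ofAdd_add]

lemma two_add_self (δ : ZMod 2) : (1 : ZMod 2) + 1 = 0 := rfl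

lemma elemM_mulinv00 (x y : ZMod (2 ^ (n - 1))) :
    elemM n hn x 0 * (elemM n hn y 0)⁻¹ = elemM n hn (x - y) 0 := by
  rw [mul_inv_eq_iff_eq_mul, elemM_mul0, sub_add_cancel]

lemma elemM_mulinv01 (x y : ZMod (2 ^ (n - 1))) :
    elemM n hn x 0 * (elemM n hn y 1)⁻¹ = elemM n hn (x - mc n * y) 1 := by
  rw [mul_inv_eq_iff_eq_mul, elemM_mul1, sub_add_cancel]
  have h2 : (1 : ZMod 2) + 1 = 0 := rfl
  rw [h2]

lemma elemM_mulinv10 (x y : ZMod (2 ^ (n - 1))) :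
    elemM n hn x 1 * (elemM n hn y 0)⁻¹ = elemM n hn (x - mc n * y) 1 := by
  rw [mul_inv_eq_iff_eq_mul, elemM_mul1, sub_add_cancel, add_zero]

lemma elemM_mulinv11 (x y : ZMod (2 ^ (n - 1))) :
    elemM n hn x 1 * (elemM n hn y 1)⁻¹ = elemM n hn (x - y) 0 := by
  rw [mul_inv_eq_iff_eq_mul, elemM_mul0, sub_add_cancel]

lemma Mpow_X_pow (j : ℕ) : Mpow.X n hn ^ j = elemM n hn (j : ZMod (2 ^ (n - 1))) 0 := by
  induction j with
  | zero =>
    rw [pow_zero, Nat.cast_zero]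
    rfl
  | succ j ih =>
    rw [pow_succ, ih]
    have hX : Mpow.X n hn = elemM n hn 1 0 := rfl
    rw [hX]
    have := elemM_mul0 n hn (j : ZMod (2 ^ (n - 1))) 1 0
    rw [this]
    push_cast
    ring_nf

lemma Mpow_Y_X_pow (j : ℕ) :
    Mpow.Y n hn * Mpow.X n hn ^ j = elemM n hn (mc n * (j : ZMod (2 ^ (n - 1)))) 1 := by
  rw [Mpow_X_pow]
  have hY : Mpow.Y n hn = elemM n hn 0 1 := rfl
  rw [hY, elemM_mul1, zero_add, add_zero]


def blockEquiv (n : ℕ) (hn : 4 ≤ n) :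
    (ZMod (2 ^ (n - 1)) ⊕ ZMod (2 ^ (n - 1))) ≃ Mpow n hn where
  toFun := Sum.elim (fun x => elemM n hn x 0) (fun x => elemM n hn (mc n * x) 1)
  invFun g := if Multiplicative.toAdd g.right = 0
    then Sum.inl (Multiplicative.toAdd g.left)
    else Sum.inr (mc n * Multiplicative.toAdd g.left)
  left_inv := by
    have hcc : ∀ w : ZMod (2 ^ (n - 1)), mc n * (mc n * w) = w := fun w => by
      rw [← mul_assoc, mc_sq n hn, one_mul]
    rintro (x | x) <;> simp [elemM, hcc]
  right_inv := by
    have hcc : ∀ w : ZMod (2 ^ (n - 1)), mc n * (mc n * w) = w := fun w => by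
      rw [← mul_assoc, mc_sq n hn, one_mul]
    intro g
    have h2 : ∀ z : ZMod 2, z = 0 ∨ z = 1 := by decide
    rcases h2 (Multiplicative.toAdd g.right) with h | h
    · show (if Multiplicative.toAdd g.right = 0
          then Sum.inl (Multiplicative.toAdd g.left)
          else Sum.inr (mc n * Multiplicative.toAdd g.left)).elim
          (fun x => elemM n hn x 0) (fun x => elemM n hn (mc n * x) 1) = g
      rw [if_pos h]
      show elemM n hn (Multiplicative.toAdd g.left) 0 = g
      unfold elemM
      ext
      · simp
      · show Multiplicative.ofAdd (0 : ZMod 2) = g.right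
        rw [← h, ofAdd_toAdd]
    · show (if Multiplicative.toAdd g.right = 0
          then Sum.inl (Multiplicative.toAdd g.left)
          else Sum.inr (mc n * Multiplicative.toAdd g.left)).elim
          (fun x => elemM n hn x 0) (fun x => elemM n hn (mc n * x) 1) = g
      rw [if_neg (by rw [h]; exact one_ne_zero)]
      show elemM n hn (mc n * (mc n * Multiplicative.toAdd g.left)) 1 = g
      rw [hcc]
      unfold elemM
      ext
      · simp
      · show Multiplicative.ofAdd (1 : ZMod 2) = g.right
        rw [← h, ofAdd_toAdd]

lemma blockEquiv_inl (n : ℕ) (hn : 4 ≤ n) (x : ZMod (2 ^ (n - 1))) :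
    blockEquiv n hn (Sum.inl x) = elemM n hn x 0 := rfl

lemma blockEquiv_inr (n : ℕ) (hn : 4 ≤ n) (x : ZMod (2 ^ (n - 1))) :
    blockEquiv n hn (Sum.inr x) = elemM n hn (mc n * x) 1 := rfl

end GroupStruct

/-- factorization of the group determinant of `M_{2^n}` over the
`2 ^ (n-1)`st roots of unity. -/
theorem mpow_det_formula (n : ℕ) (hn : 4 ≤ n) (a : Mpow n hn → ℤ) (f g : ℂ → ℂ)
    (hf : ∀ z : ℂ, f z = ∑ j ∈ Finset.range (2 ^ (n - 1)),
      (a (Mpow.X n hn ^ j) : ℂ) * z ^ j)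
    (hg : ∀ z : ℂ, g z = ∑ j ∈ Finset.range (2 ^ (n - 1)),
      (a (Mpow.Y n hn * Mpow.X n hn ^ j) : ℂ) * z ^ j) :
    ((groupDet a : ℤ) : ℂ) =
      ∏ j ∈ Finset.range (2 ^ (n - 1)),
        (f (Complex.exp (2 * Real.pi * Complex.I * j / (2 : ℂ) ^ (n - 1))) *
            f (Complex.exp (2 * Real.pi * Complex.I * j / (2 : ℂ) ^ (n - 1)) ^
              (2 ^ (n - 2) + 1 : ℕ)) -
          g (Complex.exp (2 * Real.pi * Complex.I * j / (2 : ℂ) ^ (n - 1))) *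
            g (Complex.exp (2 * Real.pi * Complex.I * j / (2 : ℂ) ^ (n - 1)) ^
              (2 ^ (n - 2) + 1 : ℕ))) := by
    classical
  haveI : NeZero (2 ^ (n - 1)) := ⟨pow_ne_zero _ two_ne_zero⟩
  have hcc : ∀ w : ZMod (2 ^ (n - 1)), mc n * (mc n * w) = w := fun w => by
    rw [← mul_assoc, mc_sq n hn, one_mul]
  set E := blockEquiv n hn with hE
  have hdet : ((groupDet a : ℤ) : ℂ) =
      (Matrix.of fun g h : Mpow n hn => ((a (g * h⁻¹) : ℤ) : ℂ)).det := by
    rw [groupDet, show (((Matrix.of fun g h : Mpow n hn => a (g * h⁻¹)).det : ℤ) : ℂ) =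
      (Int.castRingHom ℂ) (Matrix.of fun g h : Mpow n hn => a (g * h⁻¹)).det from rfl,
      RingHom.map_det]
    rfl
  rw [hdet, ← Matrix.det_submatrix_equiv_self E]
  have hM : (Matrix.of fun g h : Mpow n hn => ((a (g * h⁻¹) : ℤ) : ℂ)).submatrix E E =
      Matrix.fromBlocks
        (Matrix.circulant fun u => ((a (elemM n hn u 0) : ℤ) : ℂ))
        (Matrix.circulant fun u => ((a (elemM n hn u 1) : ℤ) : ℂ))
        (Matrix.circulant fun u => ((a (elemM n hn (mc n * u) 1) : ℤ) : ℂ))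
        (Matrix.circulant fun u => ((a (elemM n hn (mc n * u) 0) : ℤ) : ℂ)) := by
    ext (x | x) (y | y)
    · show ((a (elemM n hn x 0 * (elemM n hn y 0)⁻¹) : ℤ) : ℂ) = _
      rw [elemM_mulinv00]
      rfl
    · show ((a (elemM n hn x 0 * (elemM n hn (mc n * y) 1)⁻¹) : ℤ) : ℂ) = _
      rw [elemM_mulinv01, show x - mc n * (mc n * y) = x - y by rw [hcc]]
      rfl
    · show ((a (elemM n hn (mc n * x) 1 * (elemM n hn y 0)⁻¹) : ℤ) : ℂ) = _
      rw [elemM_mulinv10, show mc n * x - mc n * y = mc n * (x - y) from (mul_sub _ _ _).symm]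
      rfl
    · show ((a (elemM n hn (mc n * x) 1 * (elemM n hn (mc n * y) 1)⁻¹) : ℤ) : ℂ) = _
      rw [elemM_mulinv11, show mc n * x - mc n * y = mc n * (x - y) from (mul_sub _ _ _).symm]
      rfl
  rw [hM, det_fromBlocks_circulant (2 ^ (n - 1))]
  -- abbreviations
  set α : ZMod (2 ^ (n - 1)) → ℂ := fun u => ((a (elemM n hn u 0) : ℤ) : ℂ) with hα_def
  set β : ZMod (2 ^ (n - 1)) → ℂ := fun u => ((a (elemM n hn u 1) : ℤ) : ℂ) with hβ_def
  have hcomp : ∀ (v : ZMod (2 ^ (n - 1)) → ℂ) (t : ZMod (2 ^ (n - 1))),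
      gdsig (2 ^ (n - 1)) (fun u => v (mc n * u)) t = gdsig (2 ^ (n - 1)) v (mc n * t) := by
    intro v t
    refine Fintype.sum_equiv (Function.Involutive.toPerm (fun u => mc n * u)
      (show Function.Involutive (fun u : ZMod (2 ^ (n - 1)) => mc n * u) from hcc)) _ _ fun u => ?_
    simp only [Function.Involutive.coe_toPerm]
    have h1 : mc n * u * (mc n * t) = mc n * (mc n * (u * t)) := by ring
    rw [h1, hcc]
  have hαf : ∀ t : ZMod (2 ^ (n - 1)), gdsig (2 ^ (n - 1)) α t = f (gde (2 ^ (n - 1)) t) := by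
    intro t
    rw [hf, gdsig, sum_zmod]
    refine Finset.sum_congr rfl fun k _ => ?_
    rw [Mpow_X_pow, gde_pow]
  have hβg : ∀ t : ZMod (2 ^ (n - 1)),
      gdsig (2 ^ (n - 1)) β (mc n * t) = g (gde (2 ^ (n - 1)) t) := by
    intro t
    rw [← hcomp β t, hg, gdsig, sum_zmod]
    refine Finset.sum_congr rfl fun k _ => ?_
    rw [Mpow_Y_X_pow, gde_pow]
  rw [prod_zmod]
  refine Finset.prod_congr rfl fun k _ => ?_
  have hlam : Complex.exp (2 * (Real.pi : ℂ) * Complex.I * (k : ℂ) / (2 : ℂ) ^ (n - 1)) =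
      gde (2 ^ (n - 1)) (k : ZMod (2 ^ (n - 1))) := by
    rw [gde_natCast]
    unfold gdω
    rw [← Complex.exp_nat_mul]
    congr 1
    push_cast
    ring
  have hNc : ((2 ^ (n - 2) + 1 : ℕ) : ZMod (2 ^ (n - 1))) = mc n := by
    unfold mc
    push_cast
    ring
  have hN : Complex.exp (2 * (Real.pi : ℂ) * Complex.I * (k : ℂ) / (2 : ℂ) ^ (n - 1)) ^
      (2 ^ (n - 2) + 1 : ℕ) = gde (2 ^ (n - 1)) (mc n * (k : ZMod (2 ^ (n - 1)))) := by
    rw [hlam, gde_pow, hNc]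
  rw [hN, hlam, hcomp α, hcomp β, hαf, hβg]
  have h3 : gdsig (2 ^ (n - 1)) α (mc n * (k : ZMod (2 ^ (n - 1)))) =
      f (gde (2 ^ (n - 1)) (mc n * (k : ZMod (2 ^ (n - 1))))) := hαf _
  rw [h3]
  have h4 : gdsig (2 ^ (n - 1)) β (k : ZMod (2 ^ (n - 1))) =
      g (gde (2 ^ (n - 1)) (mc n * (k : ZMod (2 ^ (n - 1))))) := by
    rw [← hβg (mc n * (k : ZMod (2 ^ (n - 1)))), hcc]
  rw [h4]
  ring
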